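/- Every word w over the positive integers is stalactic-equivalent to exactly one word of the form a₁^{m₁} a₂^{m₂} ⋯ a_k^{m_k} where the letters a₁, …, a_k are pairwise distinct and all exponents mᵢ are at least 1 (namely the word listing, in order of first occurrence from the right in a suitable canonical ordering, each distinct letter of w repeated according to its multiplicity). -/

import Mathlib

open scoped Classical

/-- Words over the positive integers. -/
abbrev Word : Type := List ℕ+

/-- Evaluation of a word: number of occurrences of each letter. -/
def ev (w : Word) : ℕ+ → ℕ := fun a => w.count a

/-- A monoid congruence on the free monoid `(ℕ⁺)*`. -/
def IsCongruence (r : Word → Word → Prop) : Prop :=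
  Equivalence r ∧ ∀ u v u' v', r u v → r u' v' → r (u ++ u') (v ++ v')

/-- Restriction of a word to the letters belonging to a set `I`. -/
noncomputable def restrictTo (I : Set ℕ+) (w : Word) : Word :=
  w.filter fun a => decide (a ∈ I)

/-- `I` is an interval (order-convex subset) of `ℕ⁺`. -/
def IsIntervalSet (I : Set ℕ+) : Prop :=
  ∀ ⦃a b c : ℕ+⦄, a ∈ I → c ∈ I → a ≤ b → b ≤ c → b ∈ I

/-- Compatibility with restriction to alphabet intervals. -/
def CompatRestrict (r : Word → Word → Prop) : Prop :=
  ∀ I : Set ℕ+, IsIntervalSet I → ∀ u v, r u v → r (restrictTo I u) (restrictTo I v)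

/-- `r` is a `φ`-congruence. -/
def IsPhiCongruence (φ : Word → Word) (r : Word → Word → Prop) : Prop :=
  ∀ u v, r u v ↔ (r (φ u) (φ v) ∧ ev u = ev v)

/-- Standardization. -/
def std (w : Word) : Word :=
  (List.range w.length).map fun i =>
    ⟨((List.range w.length).countP fun j =>
        decide (w.getD j 1 < w.getD i 1 ∨ (w.getD j 1 = w.getD i 1 ∧ j < i))) + 1,
      Nat.succ_pos _⟩

/-- Packing. -/
def pack (w : Word) : Word :=
  w.map fun a => ⟨(w.dedup.countP fun b => decide (b < a)) + 1, Nat.succ_pos _⟩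

theorem parkBad_ex (w : Word) :
    ∃ d : ℕ, 1 ≤ d ∧ (w.countP fun a : ℕ+ => decide ((a : ℕ) ≤ d)) < d :=
  ⟨w.length + 1, Nat.succ_le_succ (Nat.zero_le _), by
    have h : (w.countP fun a : ℕ+ => decide ((a : ℕ) ≤ w.length + 1)) ≤ w.length :=
      List.countP_le_length
    omega⟩

/-- The smallest `d ≥ 1` such that fewer than `d` letters of `w` are `≤ d`. -/
noncomputable def parkBad (w : Word) : ℕ := Nat.find (parkBad_ex w)

/-- One pass of the parkization procedure, with fuel. -/
noncomputable def parkAux : ℕ → Word → Word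
  | 0, w => w
  | f + 1, w =>
    if parkBad w ≤ w.length then
      parkAux f (w.map fun a : ℕ+ => if parkBad w < (a : ℕ) then (a - 1 : ℕ+) else a)
    else w

/-- Parkization. The fuel `(sum of the letters)` always suffices,
since every pass strictly decreases the sum of the letters. -/
noncomputable def park (w : Word) : Word := parkAux (w.map fun a => (a : ℕ)).sum w

/-- Smallest monoid congruence containing `base`. -/
def CongClosure (base : Word → Word → Prop) (u v : Word) : Prop :=
  ∀ r : Word → Word → Prop, IsCongruence r → (∀ x y, base x y → r x y) → r u v

def sylvBase (x y : Word) : Prop :=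
  ∃ (a b c : ℕ+) (v : Word), a ≤ b ∧ b < c ∧
    x = a :: c :: (v ++ [b]) ∧ y = c :: a :: (v ++ [b])

/-- The sylvester congruence. -/
def sylv : Word → Word → Prop := CongClosure sylvBase

def stalBase (x y : Word) : Prop :=
  ∃ (a b : ℕ+) (v : Word), x = b :: a :: (v ++ [b]) ∧ y = a :: b :: (v ++ [b])

/-- The stalactic congruence. -/
def stal : Word → Word → Prop := CongClosure stalBase

def sylvSharpBase (x y : Word) : Prop :=
  ∃ (a b c : ℕ+) (v : Word), a < b ∧ b ≤ c ∧
    x = b :: (v ++ [a, c]) ∧ y = b :: (v ++ [c, a])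

/-- The #-sylvester congruence. -/
def sylvSharp : Word → Word → Prop := CongClosure sylvSharpBase

/-- The taïga congruence: join of the sylvester and stalactic congruences. -/
def taiga : Word → Word → Prop := CongClosure fun u v => sylv u v ∨ stal u v

/-- Planar binary trees with letter labels. -/
inductive BT : Type where
  | leaf : BT
  | node : BT → ℕ+ → BT → BT
deriving DecidableEq

/-- Binary search tree insertion of a letter. -/
def BT.insert : BT → ℕ+ → BT
  | .leaf, l => .node .leaf l .leaf
  | .node L b R, l => if l ≤ b then .node (L.insert l) b R else .node L b (R.insert l)

/-- Binary search tree of a word: insert the letters from right to left. -/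
def bst (w : Word) : BT := w.foldr (fun l t => t.insert l) .leaf

/-- Planar binary trees labelled by a letter and a multiplicity. -/
inductive BSTM : Type where
  | leaf : BSTM
  | node : BSTM → ℕ+ → ℕ+ → BSTM → BSTM   -- left, letter, multiplicity, right
deriving DecidableEq

/-- Insertion of a letter into a binary search tree with multiplicities. -/
def BSTM.insert : BSTM → ℕ+ → BSTM
  | .leaf, l => .node .leaf l 1 .leaf
  | .node L l' k R, l =>
    if l = l' then .node L l' (k + 1) R
    else if l < l' then .node (L.insert l) l' k R
    else .node L l' k (R.insert l)

/-- The `P`-symbol: insert the letters of `w` from right to left. -/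
def Pmap (w : Word) : BSTM := w.foldr (fun l t => t.insert l) .leaf

/-- Letters of a BSTM in left-to-right (infix) order. -/
def BSTM.letters : BSTM → List ℕ+
  | .leaf => []
  | .node L l _ R => L.letters ++ l :: R.letters

/-- The binary search tree property for a BSTM. -/
def BSTM.IsSearchTree : BSTM → Prop
  | .leaf => True
  | .node L l _ R =>
      (∀ x ∈ L.letters, x < l) ∧ (∀ x ∈ R.letters, l < x) ∧
        L.IsSearchTree ∧ R.IsSearchTree

/-- Total multiplicity of a letter in a BSTM. -/
def BSTM.mult : BSTM → ℕ+ → ℕ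
  | .leaf, _ => 0
  | .node L l k R, a => L.mult a + (if a = l then (k : ℕ) else 0) + R.mult a

/-- Size of a BSTM: sum of the multiplicities. -/
def BSTM.size : BSTM → ℕ
  | .leaf => 0
  | .node L _ k R => L.size + (k : ℕ) + R.size

/-- Planar binary trees with multiplicities. -/
inductive BTM : Type where
  | leaf : BTM
  | node : BTM → ℕ+ → BTM → BTM
deriving DecidableEq

/-- Size of a BTM: sum of the multiplicities. -/
def BTM.size : BTM → ℕ
  | .leaf => 0
  | .node L k R => L.size + (k : ℕ) + R.size

/-- Number of nodes of a BTM. -/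
def BTM.numNodes : BTM → ℕ
  | .leaf => 0
  | .node L _ R => L.numNodes + 1 + R.numNodes

/-- Forgetting the letters of a BSTM gives a BTM. -/
def forgetLetters : BSTM → BTM
  | .leaf => .leaf
  | .node L _ k R => .node (forgetLetters L) k (forgetLetters R)

/-- The `B`-symbol: the BTM underlying `P(w)`. -/
def Bmap (w : Word) : BTM := forgetLetters (Pmap w)

/-- A packed word: its set of letters is `{1, …, k}` for some `k`. -/
def IsPacked (w : Word) : Prop := ∀ a ∈ w, ∀ b : ℕ+, b ≤ a → b ∈ w

/-- Number of packed words inserting to the BTM `T`. -/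
noncomputable def fT (T : BTM) : ℕ :=
  Set.ncard {w : Word | IsPacked w ∧ Bmap w = T}

/-- The hook-type product over the subtrees of a BTM. -/
def hookProd : BTM → ℕ
  | .leaf => 1
  | .node L k R =>
      (BTM.node L k R).size * ((k : ℕ) - 1).factorial * hookProd L * hookProd R

/-- Label the nodes of a BTM in infix order starting from a given letter;
returns the labelled tree and the next unused letter. -/
def infixLabelAux : BTM → ℕ+ → BSTM × ℕ+
  | .leaf, n => (.leaf, n)
  | .node L k R, n =>
    let p := infixLabelAux L n
    let q := infixLabelAux R (p.2 + 1)
    (.node p.1 p.2 k q.1, q.2)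

/-- Label the nodes of a BTM by `1, …, k` in infix order. -/
def infixLabel (T : BTM) : BSTM := (infixLabelAux T 1).1

/-- A canonical stalactic word: a concatenation `a₁^{m₁} ⋯ a_k^{m_k}` of blocks
with pairwise distinct letters `aᵢ` and multiplicities `mᵢ ≥ 1`. -/
def IsCanonicalStal (u : Word) : Prop :=
  ∃ L : List (ℕ+ × ℕ+), (L.map Prod.fst).Nodup ∧
    u = (L.map fun p => List.replicate ((p.2 : ℕ)) p.1).flatten

namespace StalNF

lemma join_eq_flatten (L : List (List ℕ+)) : L.flatten = L.flatten := rfl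

noncomputable def canon (w : Word) : Word :=
  (w.dedup.map fun b => List.replicate (w.count b) b).flatten

lemma congClosure_isCong (base : Word → Word → Prop) : IsCongruence (CongClosure base) := by
  constructor
  · constructor
    · intro u r hr _; exact hr.1.refl u
    · intro u v h r hr hb; exact hr.1.symm (h r hr hb)
    · intro u v w h h' r hr hb; exact hr.1.trans (h r hr hb) (h' r hr hb)
  · intro u v u' v' h h' r hr hb
    exact hr.2 u v u' v' (h r hr hb) (h' r hr hb)

lemma stal_cong : IsCongruence stal := congClosure_isCong _

lemma stal_refl (u : Word) : stal u u := stal_cong.1.refl u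
lemma stal_trans {u v w : Word} : stal u v → stal v w → stal u w := stal_cong.1.trans
lemma stal_append {u v u' v' : Word} (h : stal u v) (h' : stal u' v') :
    stal (u ++ u') (v ++ v') := stal_cong.2 _ _ _ _ h h'
lemma stal_of_base {x y : Word} (h : stalBase x y) : stal x y := fun _ _ hb => hb x y h

lemma stal_swap (a c : ℕ+) (rest : Word) (ha : a ∈ rest) :
    stal (a :: c :: rest) (c :: a :: rest) := by
  obtain ⟨s1, s2, rfl⟩ := List.append_of_mem ha
  have h : stal (a :: c :: (s1 ++ [a])) (c :: a :: (s1 ++ [a])) :=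
    stal_of_base ⟨c, a, s1, rfl, rfl⟩
  have h2 := stal_append h (stal_refl s2)
  simpa using h2

lemma stal_move (a : ℕ+) (pre suf : Word) (ha : a ∈ suf) :
    stal (a :: (pre ++ suf)) (pre ++ a :: suf) := by
  induction pre with
  | nil => simpa using stal_refl (a :: suf)
  | cons c pre ih =>
    have h1 : stal (a :: c :: (pre ++ suf)) (c :: a :: (pre ++ suf)) :=
      stal_swap a c _ (by simp [ha])
    have h2 := stal_append (stal_refl [c]) ih
    exact stal_trans (by simpa using h1) (by simpa using h2)

lemma dedup_append (u v : Word) :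
    (u ++ v).dedup = (u.dedup.filter fun x => decide (x ∉ v)) ++ v.dedup := by
  induction u with
  | nil => simp
  | cons a u ih =>
    by_cases hau : a ∈ u
    · rw [List.cons_append, List.dedup_cons_of_mem (by simp [hau]), ih,
        List.dedup_cons_of_mem hau]
    · by_cases hav : a ∈ v
      · rw [List.cons_append, List.dedup_cons_of_mem (by simp [hav]), ih,
          List.dedup_cons_of_notMem hau, List.filter_cons]
        simp [hav]
      · rw [List.cons_append, List.dedup_cons_of_notMem (by simp [hau, hav]), ih,
          List.dedup_cons_of_notMem hau, List.filter_cons]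
        simp [hav]

lemma filter_singleton_of (p : ℕ+ → Bool) (a : ℕ+) (h : p a = true) :
    List.filter p [a] = [a] := by simp [h]

lemma dedup_replicate' (n : ℕ) (a : ℕ+) (h : n ≠ 0) : (List.replicate n a).dedup = [a] := by
  induction n with
  | zero => exact absurd rfl h
  | succ n ih =>
    rw [List.replicate_succ]
    rcases Nat.eq_zero_or_pos n with h0 | h0
    · simp [h0]
    · rw [List.dedup_cons_of_mem (by simp [List.mem_replicate]; omega), ih (by omega)]

def inv' (u v : Word) : Prop := ev u = ev v ∧ u.dedup = v.dedup

lemma count_of_ev {u v : Word} (h : ev u = ev v) (a : ℕ+) : u.count a = v.count a :=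
  congrFun h a

lemma mem_iff_of_ev {u v : Word} (h : ev u = ev v) (a : ℕ+) : a ∈ u ↔ a ∈ v := by
  rw [← List.count_pos_iff, ← List.count_pos_iff, count_of_ev h a]

lemma inv'_cong : IsCongruence inv' := by
  constructor
  · exact ⟨fun u => ⟨rfl, rfl⟩, fun h => ⟨h.1.symm, h.2.symm⟩,
      fun h h' => ⟨h.1.trans h'.1, h.2.trans h'.2⟩⟩
  · intro u v u' v' h h'
    refine ⟨?_, ?_⟩
    · funext a
      show (u ++ u').count a = (v ++ v').count a
      rw [List.count_append, List.count_append, count_of_ev h.1 a, count_of_ev h'.1 a]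
    · rw [dedup_append, dedup_append, h.2, h'.2]
      congr 1
      apply List.filter_congr
      intro x _
      simp [mem_iff_of_ev h'.1 x]

lemma inv'_base {x y : Word} (h : stalBase x y) : inv' x y := by
  obtain ⟨a, b, v, rfl, rfl⟩ := h
  constructor
  · funext c
    have hp : (b :: a :: (v ++ [b])).Perm (a :: b :: (v ++ [b])) := List.Perm.swap _ _ _
    simpa [ev] using hp.count_eq c
  · have hb2 : b ∈ v ++ [b] := by simp
    rw [List.dedup_cons_of_mem (show b ∈ a :: (v ++ [b]) by simp)]
    by_cases hav : a ∈ v ++ [b]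
    · rw [List.dedup_cons_of_mem hav, List.dedup_cons_of_mem (by simp [hav]),
        List.dedup_cons_of_mem hb2]
    · have hab : a ≠ b := fun h => hav (h ▸ hb2)
      rw [List.dedup_cons_of_notMem hav,
        List.dedup_cons_of_notMem (by simp [hav, hab]),
        List.dedup_cons_of_mem hb2]

lemma stal_inv' {u v : Word} (h : stal u v) : inv' u v :=
  h inv' inv'_cong fun _ _ => inv'_base

lemma canon_eq_of_inv' {u v : Word} (h : inv' u v) : canon u = canon v := by
  unfold canon
  rw [h.2]
  congr 1
  apply List.map_congr_left
  intro b _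
  rw [count_of_ev h.1 b]

lemma mem_flatten_replicate {L : List (ℕ+ × ℕ+)} {x : ℕ+}
    (hx : x ∈ (L.map fun p => List.replicate ((p.2 : ℕ)) p.1).flatten) :
    x ∈ L.map Prod.fst := by
  simp only [List.mem_flatten, List.mem_map] at hx
  obtain ⟨l, ⟨p, hp, rfl⟩, hxl⟩ := hx
  rw [List.eq_of_mem_replicate hxl]
  exact List.mem_map.2 ⟨p, hp, rfl⟩

lemma canonical_fixed {u : Word} (h : IsCanonicalStal u) : canon u = u := by
  obtain ⟨L, hnd, rfl⟩ := h
  induction L with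
  | nil => simp [canon]
  | cons p L ih =>
    obtain ⟨a, m⟩ := p
    simp only [List.map_cons, List.nodup_cons] at hnd
    have har : a ∉ (L.map fun p => List.replicate ((p.2 : ℕ)) p.1).flatten :=
      fun h => hnd.1 (mem_flatten_replicate h)
    simp only [List.map_cons, List.flatten_cons]
    have hdedup : (List.replicate (m : ℕ) a
        ++ (L.map fun p => List.replicate ((p.2 : ℕ)) p.1).flatten).dedup
        = a :: (L.map fun p => List.replicate ((p.2 : ℕ)) p.1).flatten.dedup := by
      rw [dedup_append, dedup_replicate' _ _ m.pos.ne',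
        filter_singleton_of _ _ (decide_eq_true har), List.singleton_append]
    have hcount : ∀ b : ℕ+, (List.replicate (m : ℕ) a
        ++ (L.map fun p => List.replicate ((p.2 : ℕ)) p.1).flatten).count b
        = (if a = b then (m : ℕ) else 0)
          + (L.map fun p => List.replicate ((p.2 : ℕ)) p.1).flatten.count b := by
      intro b
      rw [List.count_append, List.count_replicate]
      simp
    unfold canon
    rw [hdedup, List.map_cons, List.flatten_cons, hcount a, if_pos rfl,
      List.count_eq_zero_of_not_mem har, Nat.add_zero]
    have hmap : (L.map fun p => List.replicate ((p.2 : ℕ)) p.1).flatten.dedup.map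
          (fun b => List.replicate ((List.replicate (m : ℕ) a
            ++ (L.map fun p => List.replicate ((p.2 : ℕ)) p.1).flatten).count b) b)
        = (L.map fun p => List.replicate ((p.2 : ℕ)) p.1).flatten.dedup.map
          (fun b => List.replicate
            ((L.map fun p => List.replicate ((p.2 : ℕ)) p.1).flatten.count b) b) := by
      apply List.map_congr_left
      intro b hb
      have hba : b ≠ a := fun h => har (h ▸ List.mem_dedup.1 hb)
      rw [hcount b, if_neg (fun h => hba h.symm), Nat.zero_add]
    rw [hmap]
    have := ih hnd.2
    unfold canon at this
    rw [this]

lemma canon_canonical (w : Word) : IsCanonicalStal (canon w) := by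
  refine ⟨w.dedup.map fun a =>
    (a, ⟨max 1 (w.count a), lt_of_lt_of_le Nat.one_pos (le_max_left _ _)⟩), ?_, ?_⟩
  · rw [List.map_map]
    simpa [Function.comp_def] using w.nodup_dedup
  · rw [List.map_map]
    unfold canon
    congr 1
    apply List.map_congr_left
    intro b hb
    have : 1 ≤ w.count b := List.count_pos_iff.2 (List.mem_dedup.1 hb)
    simp [Function.comp_def, Nat.max_eq_right this]

lemma stal_canon (w : Word) : stal w (canon w) := by
  induction w with
  | nil => simpa [canon] using stal_refl []
  | cons a t ih =>
    refine stal_trans (show stal (a :: t) (a :: canon t) by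
      simpa using stal_append (stal_refl [a]) ih) ?_
    by_cases hat : a ∈ t
    · have had : a ∈ t.dedup := List.mem_dedup.2 hat
      obtain ⟨D1, D2, hD⟩ := List.append_of_mem had
      have hnd := t.nodup_dedup
      rw [hD] at hnd
      have haD1 : a ∉ D1 := fun h =>
        (List.disjoint_of_nodup_append hnd) h (by simp)
      have haD2 : a ∉ D2 := by
        have h2 := (List.nodup_append.1 hnd).2.1
        simp only [List.nodup_cons] at h2
        exact h2.1
      have hm1 : 0 < t.count a := List.count_pos_iff.2 hat
      have hrep : List.replicate (t.count a) a = a :: List.replicate (t.count a - 1) a := by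
        conv_lhs => rw [show t.count a = (t.count a - 1) + 1 by omega]
        rw [List.replicate_succ]
      have hct : canon t = (D1.map fun b => List.replicate (t.count b) b).flatten
          ++ a :: (List.replicate (t.count a - 1) a
            ++ (D2.map fun b => List.replicate (t.count b) b).flatten) := by
        unfold canon
        rw [hD, List.map_append, List.map_cons, List.flatten_append, List.flatten_cons, hrep]
        simp only [List.cons_append, List.append_assoc]
      have hcnt : ∀ b, (a :: t).count b = t.count b + if a = b then 1 else 0 := by
        intro b; simp [List.count_cons]
      have hca : canon (a :: t) = (D1.map fun b => List.replicate (t.count b) b).flatten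
          ++ a :: a :: (List.replicate (t.count a - 1) a
            ++ (D2.map fun b => List.replicate (t.count b) b).flatten) := by
        unfold canon
        rw [List.dedup_cons_of_mem hat, hD, List.map_append, List.map_cons,
          List.flatten_append, List.flatten_cons]
        have h1 : (D1.map fun b => List.replicate ((a :: t).count b) b)
            = D1.map fun b => List.replicate (t.count b) b := by
          apply List.map_congr_left; intro b hb
          rw [hcnt b, if_neg (fun h : a = b => haD1 (h.symm ▸ hb)), Nat.add_zero]
        have h2 : (D2.map fun b => List.replicate ((a :: t).count b) b)
            = D2.map fun b => List.replicate (t.count b) b := by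
          apply List.map_congr_left; intro b hb
          rw [hcnt b, if_neg (fun h : a = b => haD2 (h.symm ▸ hb)), Nat.add_zero]
        have h3 : List.replicate ((a :: t).count a) a
            = a :: a :: List.replicate (t.count a - 1) a := by
          rw [hcnt a, if_pos rfl,
            show t.count a + 1 = (t.count a - 1) + 1 + 1 by omega]
          rfl
        rw [h1, h2, h3]
        simp only [List.cons_append, List.append_assoc]
      rw [hct, hca]
      exact stal_move a _ (a :: _) (by simp)
    · have hca : canon (a :: t) = a :: canon t := by
        unfold canon
        rw [List.dedup_cons_of_notMem hat, List.map_cons, List.flatten_cons]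
        have h0 : (a :: t).count a = 1 := by
          simp [List.count_cons, List.count_eq_zero_of_not_mem hat]
        rw [h0]
        have h1 : (t.dedup.map fun b => List.replicate ((a :: t).count b) b)
            = t.dedup.map fun b => List.replicate (t.count b) b := by
          apply List.map_congr_left; intro b hb
          have hba : b ≠ a := fun h => hat (h ▸ List.mem_dedup.1 hb)
          simp [List.count_cons, Ne.symm hba]
        rw [h1]
        rfl
      rw [hca]
      exact stal_refl _

end StalNF

theorem stal_canonical_form (w : Word) :
    ∃! u : Word, IsCanonicalStal u ∧ stal w u := by
  refine ⟨StalNF.canon w, ⟨StalNF.canon_canonical w, StalNF.stal_canon w⟩, ?_⟩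
  rintro u ⟨hu, hsw⟩
  have hinv : StalNF.inv' u w := (StalNF.inv'_cong.1.symm (StalNF.stal_inv' hsw))
  rw [← StalNF.canonical_fixed hu, StalNF.canon_eq_of_inv' hinv]
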